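/- Let n ≥ 2, N ≥ 1 and Δ ≥ 0. Under the uniform probability measure on ((Σ_k^n × Σ_k^n))^N, the probability of the event { samples : α̃ − Q(n) − Δ ≤ α_k ≤ α̃ + Δ }, where α̃ = (1/(nN)) Σ_{i=1}^N d_E(x_i,y_i), is at least 1 − 2·exp(−N·n·Δ²). -/

import Mathlib

open Filter

/-- Costs for the Levenshtein distance (formerly in Mathlib's
`Mathlib/Data/List/EditDistance/Defs.lean`, since removed). -/
structure Levenshtein.Cost (α β δ : Type*) where
  /-- Cost to delete an element from a list. -/
  delete : α → δ
  /-- Cost in insert an element into a list. -/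
  insert : β → δ
  /-- Cost to substitute one element for another in a list. -/
  substitute : α → β → δ

/-- The default cost structure: unit costs, and a match costs `0`. -/
def Levenshtein.defaultCost {α : Type*} [DecidableEq α] : Levenshtein.Cost α α ℕ where
  delete _ := 1
  insert _ := 1
  substitute a b := if a = b then 0 else 1

/-- Helper for `suffixLevenshtein` (old Mathlib definition). -/
def Levenshtein.impl {α β δ : Type*} [AddZeroClass δ] [Min δ]
    (C : Levenshtein.Cost α β δ) (xs : List α) (y : β) (d : {r : List δ // 0 < r.length}) :
    {r : List δ // 0 < r.length} :=
  let ⟨ds, w⟩ := d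
  xs.zip (ds.zip ds.tail) |>.foldr
    (init := ⟨[ds.getLast (List.length_pos_iff.mp w) + C.insert y], by simp⟩)
    (fun ⟨x, d₀, d₁⟩ ⟨r, w⟩ =>
      ⟨min (C.delete x + r[0]) (min (C.insert y + d₀) (C.substitute x y + d₁)) :: r, by simp⟩)

/-- `suffixLevenshtein C xs ys` computes the Levenshtein distance
from each suffix of `xs` to `ys` (old Mathlib definition). -/
def suffixLevenshtein {α β δ : Type*} [AddZeroClass δ] [Min δ]
    (C : Levenshtein.Cost α β δ) (xs : List α) (ys : List β) :
    {r : List δ // 0 < r.length} :=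
  ys.foldr
    (Levenshtein.impl C xs)
    (xs.foldr (init := ⟨[0], by simp⟩) (fun a ⟨r, w⟩ => ⟨(C.delete a + r[0]) :: r, by simp⟩))

/-- The Levenshtein distance between two lists (old Mathlib definition). -/
def levenshtein {α β δ : Type*} [AddZeroClass δ] [Min δ]
    (C : Levenshtein.Cost α β δ) (xs : List α) (ys : List β) : δ :=
  let ⟨r, w⟩ := suffixLevenshtein C xs ys
  r[0]

/-- Edit distance between two strings over `Fin k`, with unit costs for
substitution, deletion and insertion, and cost `0` for a match. -/
def editDist {k : ℕ} (x y : List (Fin k)) : ℕ :=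
  levenshtein Levenshtein.defaultCost x y

/-- `e_k(n)`: the average edit distance between two independent uniformly
random strings of length `n` over an alphabet of size `k`. -/
noncomputable def avgEditDist (k n : ℕ) : ℝ :=
  ((k : ℝ) ^ (2 * n))⁻¹ *
    ∑ x : Fin n → Fin k, ∑ y : Fin n → Fin k,
      (editDist (List.ofFn x) (List.ofFn y) : ℝ)

/-- `α_k(n) = e_k(n)/n`. -/
noncomputable def alphaN (k n : ℕ) : ℝ := avgEditDist k n / n

/-- The convergence-rate bound `Q(n)`. -/
noncomputable def Qbound (n : ℕ) : ℝ :=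
  Real.sqrt (2 / ((n : ℝ) - 1) * (((n : ℝ) + 1) / ((n : ℝ) - 1) +
    Real.log ((n : ℝ) - 1))) + 1 / ((n : ℝ) - 1)

/-- The sample mean `α̃` of the normalized edit distance over `N` pairs. -/
noncomputable def sampleMean (k n N : ℕ)
    (ω : Fin N → ((Fin n → Fin k) × (Fin n → Fin k))) : ℝ :=
  (1 / ((n : ℝ) * N)) *
    ∑ i : Fin N, (editDist (List.ofFn (ω i).1) (List.ofFn (ω i).2) : ℝ)

@[simp] lemma Levenshtein.defaultCost_delete {α : Type*} [DecidableEq α] (a : α) :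
    (Levenshtein.defaultCost : Levenshtein.Cost α α ℕ).delete a = 1 := rfl
@[simp] lemma Levenshtein.defaultCost_insert {α : Type*} [DecidableEq α] (a : α) :
    (Levenshtein.defaultCost : Levenshtein.Cost α α ℕ).insert a = 1 := rfl
@[simp] lemma Levenshtein.defaultCost_substitute {α : Type*} [DecidableEq α] (a b : α) :
    (Levenshtein.defaultCost : Levenshtein.Cost α α ℕ).substitute a b = if a = b then 0 else 1 := rfl

section LevAux
variable {α β δ : Type*} [AddZeroClass δ] [Min δ] (C : Levenshtein.Cost α β δ)

theorem Levenshtein.impl_length (xs : List α) (y : β) (d : {r : List δ // 0 < r.length})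
    (w : d.1.length = xs.length + 1) :
    (Levenshtein.impl C xs y d).1.length = xs.length + 1 := by
  induction xs generalizing d with
  | nil => rfl
  | cons x xs ih =>
    match d, w with
    | ⟨d₁ :: d₂ :: ds, _⟩, w =>
      have := ih ⟨d₂ :: ds, by simp⟩ (by simpa using w)
      simp only [Levenshtein.impl, List.zip_cons_cons, List.tail_cons, List.foldr_cons] at this ⊢
      simpa using this

theorem suffixLevenshtein_length (xs : List α) (ys : List β) :
    (suffixLevenshtein C xs ys).1.length = xs.length + 1 := by
  induction ys with
  | nil =>
    induction xs with
    | nil => rfl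
    | cons _ xs ih =>
      simp only [suffixLevenshtein, List.foldr_nil, List.foldr_cons] at ih ⊢
      simpa using ih
  | cons y ys ih =>
    exact Levenshtein.impl_length C xs y _ ih

theorem suffixLevenshtein_cons₁_aux {x y : {r : List δ // 0 < r.length}}
    (w₀ : x.1[0]'x.2 = y.1[0]'y.2) (w : x.1.tail = y.1.tail) : x = y := by
  match x, y with
  | ⟨hx :: tx, _⟩, ⟨hy :: ty, _⟩ => simp_all

theorem Levenshtein.impl_cons (x : α) (xs : List α) (y : β) (d : δ) (ds : List δ) (w)
    (w' : 0 < List.length ds) :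
    Levenshtein.impl C (x :: xs) y ⟨d :: ds, w⟩ =
      let ⟨r, w⟩ := Levenshtein.impl C xs y ⟨ds, w'⟩
      ⟨min (C.delete x + r[0]) (min (C.insert y + d) (C.substitute x y + ds[0])) :: r, by simp⟩ :=
  match ds, w' with | _ :: _, _ => rfl

theorem suffixLevenshtein_cons₁ (x : α) (xs : List α) (ys : List β) :
    suffixLevenshtein C (x :: xs) ys =
      ⟨levenshtein C (x :: xs) ys :: (suffixLevenshtein C xs ys).1, by simp⟩ := by
  induction ys with
  | nil => rfl
  | cons y ys ih =>
    apply suffixLevenshtein_cons₁_aux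
    · rfl
    · show (Levenshtein.impl C (x :: xs) y (suffixLevenshtein C (x :: xs) ys)).1.tail = _
      rw [ih, Levenshtein.impl_cons (w' := by simp [suffixLevenshtein_length])]
      rfl

theorem levenshtein_nil_cons (y : β) (ys : List β) :
    levenshtein C [] (y :: ys) = levenshtein C [] ys + C.insert y := by
  have h := suffixLevenshtein_length C [] ys
  show (Levenshtein.impl C [] y (suffixLevenshtein C [] ys)).1[0]'(Levenshtein.impl C [] y _).2
    = (suffixLevenshtein C [] ys).1[0]'(suffixLevenshtein C [] ys).2 + C.insert y
  generalize suffixLevenshtein C [] ys = S at h ⊢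
  obtain ⟨r, w⟩ := S
  match r, w, h with
  | [a], _, _ => rfl

@[simp] theorem levenshtein_nil_nil : levenshtein C [] [] = 0 := rfl

theorem levenshtein_cons_nil (x : α) (xs : List α) :
    levenshtein C (x :: xs) [] = C.delete x + levenshtein C xs [] := rfl

theorem Levenshtein.impl_cons_fst (x : α) (xs : List α) (y : β) (d₀ : δ)
    (S : {r : List δ // 0 < r.length}) (w) :
    (Levenshtein.impl C (x :: xs) y ⟨d₀ :: S.1, w⟩).1[0]'(Levenshtein.impl C (x :: xs) y _).2
      = min (C.delete x + (Levenshtein.impl C xs y S).1[0]'(Levenshtein.impl C xs y S).2)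
          (min (C.insert y + d₀) (C.substitute x y + S.1[0]'S.2)) := by
  obtain ⟨ds, w'⟩ := S
  match ds, w' with
  | _ :: _, _ => rfl

theorem levenshtein_cons_cons (x : α) (xs : List α) (y : β) (ys : List β) :
    levenshtein C (x :: xs) (y :: ys) =
      min (C.delete x + levenshtein C xs (y :: ys))
        (min (C.insert y + levenshtein C (x :: xs) ys)
          (C.substitute x y + levenshtein C xs ys)) := by
  show (Levenshtein.impl C (x :: xs) y (suffixLevenshtein C (x :: xs) ys)).1[0]'
      (Levenshtein.impl C (x :: xs) y _).2 = _
  rw [suffixLevenshtein_cons₁, Levenshtein.impl_cons_fst]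
  rfl

end LevAux


lemma key_ineq {p : ℝ} (hp0 : 0 ≤ p) (hp1 : p ≤ 1) (t : ℝ) :
    (1 - p) * Real.exp (-p * t) + p * Real.exp ((1 - p) * t) ≤ Real.exp (t ^ 2 / 8) := by
  set D : ℝ → ℝ := fun s => (1 - p) + p * Real.exp s with hDdef
  have hD : ∀ s, 0 < D s := by
    intro s
    rcases hp0.eq_or_lt with h | h
    · simp [hDdef, ← h]
    · have : 0 < p * Real.exp s := mul_pos h (Real.exp_pos s)
      have : (0:ℝ) ≤ 1 - p := by linarith
      simp only [hDdef]; nlinarith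
  set h : ℝ → ℝ := fun s => s^2/8 + p*s - Real.log (D s) with hhdef
  set h' : ℝ → ℝ := fun s => s/4 + p - p*Real.exp s / D s with hh'def
  have hDder : ∀ s, HasDerivAt D (p * Real.exp s) s := by
    intro s
    exact ((Real.hasDerivAt_exp s).const_mul p).const_add (1 - p)
  have hder : ∀ s, HasDerivAt h (h' s) s := by
    intro s
    have h1 : HasDerivAt (fun s : ℝ => s^2/8 + p*s) (s/4 + p) s := by
      have := ((hasDerivAt_pow 2 s).div_const 8).add ((hasDerivAt_id s).const_mul p)
      exact this.congr_deriv (by push_cast; ring)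
    have h2 : HasDerivAt (fun s => Real.log (D s)) (p * Real.exp s / D s) s :=
      (hDder s).log (hD s).ne'
    exact h1.sub h2
  have hder' : ∀ s, HasDerivAt h' (1/4 - p * Real.exp s * (1 - p) / (D s)^2) s := by
    intro s
    have h1 : HasDerivAt (fun s : ℝ => s/4 + p) (1/4) s := by
      simpa using ((hasDerivAt_id s).div_const 4).add_const p
    have h2 : HasDerivAt (fun s => p * Real.exp s / D s)
        ((p * Real.exp s * D s - p * Real.exp s * (p * Real.exp s)) / (D s)^2) s :=
      ((Real.hasDerivAt_exp s).const_mul p).div (hDder s) (hD s).ne'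
    have := h1.sub h2
    refine this.congr_deriv ?_
    have := (hD s).ne'
    field_simp
    ring
  have hmono : Monotone h' := by
    apply monotone_of_deriv_nonneg (fun s => (hder' s).differentiableAt)
    intro s
    rw [(hder' s).deriv]
    rw [sub_nonneg, div_le_iff₀ (pow_pos (hD s) 2)]
    nlinarith [sq_nonneg ((1 - p) - p * Real.exp s), Real.exp_pos s,
      mul_nonneg hp0 (Real.exp_pos s).le]
  have hD0 : D 0 = 1 := by simp [hDdef]
  have h'0 : h' 0 = 0 := by simp [hh'def, hD0]
  have h0 : h 0 = 0 := by simp [hhdef, hD0]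
  have hdiff : Differentiable ℝ h := fun s => (hder s).differentiableAt
  have hnn : ∀ s, 0 ≤ h s := by
    intro s
    rcases le_total 0 s with hs | hs
    · have := monotoneOn_of_deriv_nonneg (convex_Ici 0) hdiff.continuous.continuousOn
        (fun x _ => (hdiff x).differentiableWithinAt)
        (fun x hx => by
          rw [(hder x).deriv, ← h'0]
          exact hmono (le_of_lt (by simpa using hx)))
        (Set.self_mem_Ici) (Set.mem_Ici.mpr hs) hs
      simpa [h0] using this
    · have := antitoneOn_of_deriv_nonpos (convex_Iic 0) hdiff.continuous.continuousOn
        (fun x _ => (hdiff x).differentiableWithinAt)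
        (fun x hx => by
          rw [(hder x).deriv, ← h'0]
          exact hmono (le_of_lt (by simpa using hx)))
        (Set.mem_Iic.mpr hs) (Set.self_mem_Iic) hs
      simpa [h0] using this
  have hlog : D t ≤ Real.exp (t^2/8 + p*t) := by
    have := hnn t
    rw [hhdef] at this
    have hlog' : Real.log (D t) ≤ t^2/8 + p*t := by linarith
    calc D t = Real.exp (Real.log (D t)) := (Real.exp_log (hD t)).symm
    _ ≤ _ := Real.exp_le_exp.mpr hlog'
  calc (1 - p) * Real.exp (-p * t) + p * Real.exp ((1 - p) * t)
      = Real.exp (-p * t) * D t := by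
        rw [show (1-p)*t = -p*t + t by ring, Real.exp_add, hDdef]; ring
    _ ≤ Real.exp (-p * t) * Real.exp (t^2/8 + p*t) :=
        mul_le_mul_of_nonneg_left hlog (Real.exp_pos _).le
    _ = Real.exp (t^2/8) := by rw [← Real.exp_add]; ring_nf

noncomputable def Eavg {Ω : Type*} [Fintype Ω] (f : Ω → ℝ) : ℝ :=
  (∑ ω, f ω) / Fintype.card Ω

section EavgLemmas
variable {Ω : Type*} [Fintype Ω] [Nonempty Ω]

lemma card_pos' : (0:ℝ) < Fintype.card Ω := by exact_mod_cast Fintype.card_pos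

lemma Eavg_mono {f g : Ω → ℝ} (h : ∀ ω, f ω ≤ g ω) : Eavg f ≤ Eavg g := by
  exact div_le_div_of_nonneg_right (Finset.sum_le_sum fun ω _ => h ω) card_pos'.le

lemma Eavg_const (c : ℝ) : Eavg (fun _ : Ω => c) = c := by
  have hcard : (Fintype.card Ω : ℝ) ≠ 0 := card_pos'.ne'
  simp only [Eavg, Finset.sum_const, nsmul_eq_mul, Finset.card_univ]
  field_simp

lemma card_mul_Eavg (f : Ω → ℝ) : (Fintype.card Ω : ℝ) * Eavg f = ∑ ω, f ω := by
  unfold Eavg; field_simp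

lemma Eavg_affine (f : Ω → ℝ) (C c : ℝ) :
    Eavg (fun ω => C + (f ω - Eavg f) * c) = C := by
  have hcard : (Fintype.card Ω : ℝ) ≠ 0 := card_pos'.ne'
  have h1 : ∑ ω, (C + (f ω - Eavg f) * c)
      = (Fintype.card Ω : ℝ) * C + ((∑ ω, f ω) - (Fintype.card Ω : ℝ) * Eavg f) * c := by
    rw [Finset.sum_add_distrib, Finset.sum_const, nsmul_eq_mul, ← Finset.sum_mul,
      Finset.sum_sub_distrib, Finset.sum_const, nsmul_eq_mul, Finset.card_univ]
  have h2 : Eavg (fun ω => C + (f ω - Eavg f) * c)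
      = (∑ ω, (C + (f ω - Eavg f) * c)) / (Fintype.card Ω : ℝ) := rfl
  rw [h2, h1, card_mul_Eavg, sub_self, zero_mul, add_zero]
  field_simp

lemma Eavg_sub (f g : Ω → ℝ) : Eavg (fun ω => f ω - g ω) = Eavg f - Eavg g := by
  unfold Eavg; rw [Finset.sum_sub_distrib, sub_div]

lemma hoeffding_avg (f : Ω → ℝ) (hd : ∀ ω ω', f ω - f ω' ≤ 1) (t : ℝ) :
    Eavg (fun ω => Real.exp (t * (f ω - Eavg f))) ≤ Real.exp (t^2/8) := by
  obtain ⟨ω₀, -, hmin⟩ := Finset.exists_min_image Finset.univ f Finset.univ_nonempty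
  set a := f ω₀ with ha
  have hlow : ∀ ω, a ≤ f ω := fun ω => hmin ω (Finset.mem_univ ω)
  have hupp : ∀ ω, f ω ≤ a + 1 := fun ω => by have := hd ω ω₀; linarith
  set μ := Eavg f with hμ
  have hμl : a ≤ μ := by
    rw [hμ, ← Eavg_const (Ω := Ω) a]; exact Eavg_mono hlow
  have hμu : μ ≤ a + 1 := by
    rw [hμ, ← Eavg_const (Ω := Ω) (a+1)]; exact Eavg_mono hupp
  set p := μ - a with hp
  set E1 := Real.exp (-p*t) with hE1
  set E2 := Real.exp ((1-p)*t) with hE2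
  have hpt : ∀ ω, Real.exp (t * (f ω - μ)) ≤
      ((1-p)*E1 + p*E2) + (f ω - μ) * (E2 - E1) := by
    intro ω
    have hw1 : (0:ℝ) ≤ (1 - p) - (f ω - μ) := by have := hupp ω; simp only [hp]; linarith
    have hw2 : (0:ℝ) ≤ (f ω - μ) + p := by have := hlow ω; simp only [hp]; linarith
    have hsum : ((1 - p) - (f ω - μ)) + ((f ω - μ) + p) = 1 := by ring
    have := convexOn_exp.2 (Set.mem_univ (-p*t)) (Set.mem_univ ((1-p)*t)) hw1 hw2 hsum
    simp only [smul_eq_mul] at this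
    calc Real.exp (t * (f ω - μ))
        = Real.exp (((1 - p) - (f ω - μ)) * (-p*t) + ((f ω - μ) + p) * ((1-p)*t)) := by
          congr 1; ring
      _ ≤ ((1 - p) - (f ω - μ)) * E1 + ((f ω - μ) + p) * E2 := this
      _ = ((1-p)*E1 + p*E2) + (f ω - μ) * (E2 - E1) := by ring
  calc Eavg (fun ω => Real.exp (t * (f ω - μ)))
      ≤ Eavg (fun ω => ((1-p)*E1 + p*E2) + (f ω - μ) * (E2 - E1)) := Eavg_mono hpt
    _ = (1-p)*E1 + p*E2 := Eavg_affine f _ _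
    _ ≤ Real.exp (t^2/8) := key_ineq (by simp only [hp]; linarith) (by simp only [hp]; linarith) t

end EavgLemmas

section McDiarmid
variable {κ : Type*} [Fintype κ] [Nonempty κ]

lemma sum_cons_eq (M : ℕ) (F : (Fin (M+1) → κ) → ℝ) :
    ∑ ω, F ω = ∑ a : κ, ∑ ω' : Fin M → κ, F (Fin.cons a ω') := by
  rw [← Equiv.sum_comp (Fin.consEquiv (fun _ => κ)) F, Fintype.sum_prod_type]
  rfl

lemma card_fun_succ (M : ℕ) :
    (Fintype.card (Fin (M+1) → κ) : ℝ) = (Fintype.card κ : ℝ) * (Fintype.card (Fin M → κ) : ℝ) := by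
  simp [Fintype.card_fun, pow_succ]
  ring

lemma mcdiarmid_mgf :
    ∀ (M : ℕ) (f : (Fin M → κ) → ℝ),
      (∀ (i : Fin M) (ω ω' : Fin M → κ), (∀ j, j ≠ i → ω j = ω' j) → f ω - f ω' ≤ 1) →
      ∀ t : ℝ, Eavg (fun ω => Real.exp (t * (f ω - Eavg f))) ≤ Real.exp (M * t^2/8) := by
  intro M
  induction M with
  | zero =>
    intro f _ t
    have hc : ∀ ω : Fin 0 → κ, ω = (fun i => i.elim0) := fun ω => funext fun i => i.elim0
    have h1 : Eavg f = f (fun i => i.elim0) := by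
      conv_lhs => rw [show f = (fun _ => f (fun i => i.elim0)) from funext fun ω => by rw [hc ω]]
      exact Eavg_const _
    have h2 : (fun ω : Fin 0 → κ => Real.exp (t * (f ω - Eavg f)))
        = fun _ => (1:ℝ) := by
      funext ω; rw [hc ω, h1]; simp
    rw [h2, Eavg_const]
    simp
  | succ M ih =>
    intro f hbd t
    set g : (Fin M → κ) → ℝ := fun ω' => Eavg (fun a : κ => f (Fin.cons a ω')) with hg
    set c : ℝ := (Fintype.card κ : ℝ) with hcdef
    have hcpos : 0 < c := by rw [hcdef]; exact_mod_cast Fintype.card_pos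
    have hcM : (0:ℝ) < (Fintype.card (Fin M → κ) : ℝ) := by exact_mod_cast Fintype.card_pos
    -- Eavg g = Eavg f
    have hsum_g : ∑ ω' : Fin M → κ, g ω' = (∑ ω : Fin (M+1) → κ, f ω) / c := by
      have : ∀ ω' : Fin M → κ, g ω' = (∑ a : κ, f (Fin.cons a ω')) / c := fun ω' => rfl
      rw [show (∑ ω' : Fin M → κ, g ω') = ∑ ω' : Fin M → κ, (∑ a : κ, f (Fin.cons a ω')) / c
        from Finset.sum_congr rfl fun ω' _ => this ω']
      rw [← Finset.sum_div, sum_cons_eq M f, Finset.sum_comm]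
    have hEg : Eavg g = Eavg f := by
      show (∑ ω', g ω') / _ = (∑ ω, f ω) / _
      rw [hsum_g, card_fun_succ M, div_div, ← hcdef, mul_comm]
    -- bounded differences for g
    have hbdg : ∀ (i : Fin M) (ω' ω'' : Fin M → κ),
        (∀ j, j ≠ i → ω' j = ω'' j) → g ω' - g ω'' ≤ 1 := by
      intro i ω' ω'' hagree
      have h1 : g ω' - g ω'' = Eavg (fun a => f (Fin.cons a ω') - f (Fin.cons a ω'')) :=
        (Eavg_sub _ _).symm
      rw [h1]
      calc Eavg (fun a => f (Fin.cons a ω') - f (Fin.cons a ω''))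
          ≤ Eavg (fun _ : κ => (1:ℝ)) := by
            apply Eavg_mono
            intro a
            apply hbd i.succ
            intro j hj
            obtain rfl | ⟨j', rfl⟩ := Fin.eq_zero_or_eq_succ j
            · simp
            · simp only [Fin.cons_succ]
              exact hagree j' (fun h => hj (by rw [h]))
        _ = 1 := Eavg_const 1
    -- inner Hoeffding
    have hinner : ∀ ω' : Fin M → κ,
        ∑ a : κ, Real.exp (t * (f (Fin.cons a ω') - g ω')) ≤ c * Real.exp (t^2/8) := by
      intro ω'
      have hd : ∀ a b : κ, f (Fin.cons a ω') - f (Fin.cons b ω') ≤ 1 := by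
        intro a b
        apply hbd 0
        intro j hj
        obtain rfl | ⟨j', rfl⟩ := Fin.eq_zero_or_eq_succ j
        · exact absurd rfl hj
        · simp [Fin.cons_succ]
      have := hoeffding_avg (fun a : κ => f (Fin.cons a ω')) hd t
      have h2 : Eavg (fun a : κ => Real.exp (t * (f (Fin.cons a ω') - g ω')))
          = (∑ a : κ, Real.exp (t * (f (Fin.cons a ω') - g ω'))) / c := rfl
      rw [show (Eavg fun a => f (Fin.cons a ω')) = g ω' from rfl, h2] at this
      calc ∑ a : κ, Real.exp (t * (f (Fin.cons a ω') - g ω'))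
          = (∑ a : κ, Real.exp (t * (f (Fin.cons a ω') - g ω'))) / c * c := by
            field_simp
        _ ≤ Real.exp (t^2/8) * c := by
            apply mul_le_mul_of_nonneg_right this hcpos.le
        _ = c * Real.exp (t^2/8) := mul_comm _ _
    -- main chain at the sum level
    have hkey : ∑ ω : Fin (M+1) → κ, Real.exp (t * (f ω - Eavg f))
        ≤ c * Real.exp (t^2/8) * ∑ ω' : Fin M → κ, Real.exp (t * (g ω' - Eavg g)) := by
      rw [sum_cons_eq M, Finset.sum_comm]
      have hsplit : ∀ (ω' : Fin M → κ) (a : κ),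
          Real.exp (t * (f (Fin.cons a ω') - Eavg f))
            = Real.exp (t * (f (Fin.cons a ω') - g ω')) * Real.exp (t * (g ω' - Eavg g)) := by
        intro ω' a
        rw [← Real.exp_add, hEg]
        congr 1
        ring
      calc ∑ ω' : Fin M → κ, ∑ a : κ, Real.exp (t * (f (Fin.cons a ω') - Eavg f))
          = ∑ ω' : Fin M → κ,
              (∑ a : κ, Real.exp (t * (f (Fin.cons a ω') - g ω'))) *
                Real.exp (t * (g ω' - Eavg g)) := by
            apply Finset.sum_congr rfl
            intro ω' _
            rw [Finset.sum_mul]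
            exact Finset.sum_congr rfl fun a _ => hsplit ω' a
        _ ≤ ∑ ω' : Fin M → κ,
              (c * Real.exp (t^2/8)) * Real.exp (t * (g ω' - Eavg g)) := by
            apply Finset.sum_le_sum
            intro ω' _
            exact mul_le_mul_of_nonneg_right (hinner ω') (Real.exp_pos _).le
        _ = _ := by rw [← Finset.mul_sum]
    -- divide by card
    have hEavg_form : Eavg (fun ω : Fin (M+1) → κ => Real.exp (t * (f ω - Eavg f)))
        = (∑ ω : Fin (M+1) → κ, Real.exp (t * (f ω - Eavg f)))
            / (Fintype.card (Fin (M+1) → κ) : ℝ) := rfl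
    have hEavg_form' : Eavg (fun ω' : Fin M → κ => Real.exp (t * (g ω' - Eavg g)))
        = (∑ ω' : Fin M → κ, Real.exp (t * (g ω' - Eavg g)))
            / (Fintype.card (Fin M → κ) : ℝ) := rfl
    have hIH := ih g hbdg t
    rw [hEavg_form'] at hIH
    rw [hEavg_form, card_fun_succ M, ← hcdef]
    calc (∑ ω : Fin (M+1) → κ, Real.exp (t * (f ω - Eavg f)))
          / (c * (Fintype.card (Fin M → κ) : ℝ))
        ≤ (c * Real.exp (t^2/8) * ∑ ω' : Fin M → κ, Real.exp (t * (g ω' - Eavg g)))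
          / (c * (Fintype.card (Fin M → κ) : ℝ)) := by
          apply div_le_div_of_nonneg_right hkey
          positivity
      _ = Real.exp (t^2/8) *
            ((∑ ω' : Fin M → κ, Real.exp (t * (g ω' - Eavg g)))
              / (Fintype.card (Fin M → κ) : ℝ)) := by
          field_simp
      _ ≤ Real.exp (t^2/8) * Real.exp ((M : ℝ) * t^2/8) := by
          apply mul_le_mul_of_nonneg_left hIH (Real.exp_pos _).le
      _ = Real.exp (((M:ℕ)+1 : ℕ) * t^2/8) := by
          rw [← Real.exp_add]
          congr 1
          push_cast
          ring

end McDiarmid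

lemma mcdiarmid_tail {κ : Type*} [Fintype κ] [Nonempty κ] (M : ℕ) (hM : 0 < M)
    (f : (Fin M → κ) → ℝ)
    (hbd : ∀ (i : Fin M) (ω ω' : Fin M → κ), (∀ j, j ≠ i → ω j = ω' j) → f ω - f ω' ≤ 1)
    (ε : ℝ) (hε : 0 ≤ ε) :
    ((Finset.univ.filter (fun ω : Fin M → κ => Eavg f + ε ≤ f ω)).card : ℝ)
      ≤ (Fintype.card (Fin M → κ) : ℝ) * Real.exp (-(2*ε^2/M)) := by
  have hMR : (0:ℝ) < (M:ℝ) := by exact_mod_cast hM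
  set t : ℝ := 4*ε/M with ht
  have htpos : 0 ≤ t := by positivity
  have hmgf := mcdiarmid_mgf M f hbd t
  set S := Finset.univ.filter (fun ω : Fin M → κ => Eavg f + ε ≤ f ω) with hS
  have h1 : (S.card : ℝ) ≤ ∑ ω ∈ S, Real.exp (t*(f ω - Eavg f) - t*ε) := by
    calc (S.card : ℝ) = ∑ _ω ∈ S, (1:ℝ) := by simp
      _ ≤ _ := by
          apply Finset.sum_le_sum
          intro ω hω
          rw [hS, Finset.mem_filter] at hω
          apply Real.one_le_exp
          have h := hω.2
          nlinarith
  have h2 : ∑ ω ∈ S, Real.exp (t*(f ω - Eavg f) - t*ε)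
      ≤ ∑ ω : Fin M → κ, Real.exp (t*(f ω - Eavg f) - t*ε) :=
    Finset.sum_le_sum_of_subset_of_nonneg (Finset.subset_univ S)
      (fun ω _ _ => (Real.exp_pos _).le)
  have h3 : ∑ ω : Fin M → κ, Real.exp (t*(f ω - Eavg f) - t*ε)
      = Real.exp (-(t*ε)) * ∑ ω : Fin M → κ, Real.exp (t*(f ω - Eavg f)) := by
    rw [Finset.mul_sum]
    apply Finset.sum_congr rfl
    intro ω _
    rw [← Real.exp_add]
    congr 1
    ring
  have h4 : ∑ ω : Fin M → κ, Real.exp (t*(f ω - Eavg f))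
      ≤ (Fintype.card (Fin M → κ) : ℝ) * Real.exp ((M:ℝ)*t^2/8) := by
    have hform : Eavg (fun ω : Fin M → κ => Real.exp (t * (f ω - Eavg f)))
        = (∑ ω : Fin M → κ, Real.exp (t*(f ω - Eavg f)))
          / (Fintype.card (Fin M → κ) : ℝ) := rfl
    rw [hform, div_le_iff₀ (card_pos')] at hmgf
    linarith [hmgf]
  have hexp : Real.exp (-(t*ε)) * ((Fintype.card (Fin M → κ) : ℝ) * Real.exp ((M:ℝ)*t^2/8))
      = (Fintype.card (Fin M → κ) : ℝ) * Real.exp (-(2*ε^2/M)) := by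
    rw [← mul_assoc, mul_comm (Real.exp _), mul_assoc, ← Real.exp_add]
    congr 2
    rw [ht]
    field_simp
    ring
  calc (S.card : ℝ) ≤ Real.exp (-(t*ε)) * ∑ ω : Fin M → κ, Real.exp (t*(f ω - Eavg f)) := by
        rw [← h3]; exact h1.trans h2
    _ ≤ Real.exp (-(t*ε)) * ((Fintype.card (Fin M → κ) : ℝ) * Real.exp ((M:ℝ)*t^2/8)) :=
        mul_le_mul_of_nonneg_left h4 (Real.exp_pos _).le
    _ = _ := hexp

lemma Eavg_neg {Ω : Type*} [Fintype Ω] (f : Ω → ℝ) :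
    Eavg (fun ω => -f ω) = -Eavg f := by
  unfold Eavg
  rw [Finset.sum_neg_distrib, neg_div]

lemma Eavg_comp_equiv {Ω Ω' : Type*} [Fintype Ω] [Fintype Ω'] (e : Ω ≃ Ω') (f : Ω → ℝ) :
    Eavg (fun ω' => f (e.symm ω')) = Eavg f := by
  unfold Eavg
  rw [Equiv.sum_comp e.symm f, Fintype.card_congr e]

lemma Eavg_comp_eval {ι ρ : Type*} [Fintype ι] [Fintype ρ] [Nonempty ρ] [DecidableEq ι]
    (i : ι) (d : ρ → ℝ) :
    Eavg (fun σ : ι → ρ => d (σ i)) = Eavg d := by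
  classical
  set e := Equiv.piSplitAt i (fun _ : ι => ρ) with he
  have h1 : ∑ σ : ι → ρ, d (σ i) = ∑ p : ρ × ({j // j ≠ i} → ρ), d p.1 := by
    rw [← Equiv.sum_comp e.symm (fun σ : ι → ρ => d (σ i))]
    apply Finset.sum_congr rfl
    intro p _
    congr 1
    simp [he, Equiv.piSplitAt]
  have h2 : ∑ p : ρ × ({j // j ≠ i} → ρ), d p.1
      = (Fintype.card ({j // j ≠ i} → ρ) : ℝ) * ∑ a : ρ, d a := by
    rw [Fintype.sum_prod_type]
    simp only [Finset.sum_const, Finset.card_univ, nsmul_eq_mul]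
    rw [Finset.mul_sum]
  have h3 : (Fintype.card (ι → ρ) : ℝ)
      = (Fintype.card ρ : ℝ) * (Fintype.card ({j // j ≠ i} → ρ) : ℝ) := by
    rw [Fintype.card_congr e, Fintype.card_prod]
    push_cast
    ring
  have hρ : (Fintype.card ρ : ℝ) ≠ 0 := card_pos'.ne'
  have hR : (Fintype.card ({j // j ≠ i} → ρ) : ℝ) ≠ 0 := by
    have : Nonempty ({j // j ≠ i} → ρ) := ⟨fun _ => Classical.arbitrary ρ⟩
    exact card_pos'.ne'
  unfold Eavg
  rw [h1, h2, h3]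
  field_simp

lemma Eavg_sum_eval {ι ρ : Type*} [Fintype ι] [Fintype ρ] [Nonempty ρ] [DecidableEq ι]
    (d : ρ → ℝ) :
    Eavg (fun σ : ι → ρ => ∑ i : ι, d (σ i)) = (Fintype.card ι : ℝ) * Eavg d := by
  have h1 : Eavg (fun σ : ι → ρ => ∑ i : ι, d (σ i))
      = ∑ i : ι, Eavg (fun σ : ι → ρ => d (σ i)) := by
    unfold Eavg
    rw [← Finset.sum_div]
    congr 1
    rw [Finset.sum_comm]
  rw [h1]
  rw [Finset.sum_congr rfl (fun i _ => Eavg_comp_eval i d)]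
  simp [Finset.sum_const, nsmul_eq_mul]

namespace EditAux

variable {k : ℕ}

/-- Hamming-type mismatch count of two lists (up to the shorter length). -/
def ham : List (Fin k) → List (Fin k) → ℕ
  | [], _ => 0
  | _, [] => 0
  | a :: x, b :: y => (if a = b then 0 else 1) + ham x y

@[simp] lemma ham_nil_left (y : List (Fin k)) : ham [] y = 0 := by cases y <;> rfl
@[simp] lemma ham_nil_right (x : List (Fin k)) : ham x [] = 0 := by cases x <;> rfl
@[simp] lemma ham_cons_cons (a b : Fin k) (x y : List (Fin k)) :
    ham (a :: x) (b :: y) = (if a = b then 0 else 1) + ham x y := rfl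

@[simp] lemma ham_self (x : List (Fin k)) : ham x x = 0 := by
  induction x with
  | nil => rfl
  | cons a x ih => simp [ih]

lemma lev_nil_right (x : List (Fin k)) :
    levenshtein Levenshtein.defaultCost x [] = x.length := by
  induction x with
  | nil => simp
  | cons a x ih => rw [levenshtein_cons_nil, ih]; simp [Nat.add_comm]

lemma lev_nil_left (y : List (Fin k)) :
    levenshtein Levenshtein.defaultCost [] y = y.length := by
  induction y with
  | nil => simp
  | cons d ys ih => rw [levenshtein_nil_cons, ih]; simp [Nat.add_comm]

lemma lev_le_add_ham_left :
    ∀ (x x' y : List (Fin k)), x.length = x'.length →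
      levenshtein Levenshtein.defaultCost x y ≤
        levenshtein Levenshtein.defaultCost x' y + ham x x' := by
  intro x
  induction x with
  | nil =>
    intro x' y hlen
    cases x' with
    | nil => simp
    | cons a' xs' => simp at hlen
  | cons a xs ih =>
    intro x' y hlen
    cases x' with
    | nil => simp at hlen
    | cons a' xs' =>
      have hlen' : xs.length = xs'.length := by simpa using hlen
      induction y with
      | nil =>
        rw [lev_nil_right, lev_nil_right]
        have : xs.length = xs'.length := hlen'
        simp only [List.length_cons]
        omega
      | cons d ys ihy =>
        rw [levenshtein_cons_cons, levenshtein_cons_cons]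
        simp only [Levenshtein.defaultCost_delete, Levenshtein.defaultCost_insert,
          Levenshtein.defaultCost_substitute, ham_cons_cons]
        rw [← min_add_add_right, ← min_add_add_right]
        refine le_min ?_ (le_min ?_ ?_)
        · refine min_le_of_left_le ?_
          have h1 := ih xs' (d :: ys) hlen'
          omega
        · refine min_le_of_right_le (min_le_of_left_le ?_)
          have h2 := ihy
          rw [ham_cons_cons] at h2
          omega
        · refine min_le_of_right_le (min_le_of_right_le ?_)
          have h3 := ih xs' ys hlen'
          split_ifs with e1 e2 e3 <;> first | omega | (exfalso; subst_vars; simp_all)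
   
lemma lev_le_add_ham_right :
    ∀ (y y' x : List (Fin k)), y.length = y'.length →
      levenshtein Levenshtein.defaultCost x y ≤
        levenshtein Levenshtein.defaultCost x y' + ham y y' := by
  intro y
  induction y with
  | nil =>
    intro y' x hlen
    cases y' with
    | nil => simp
    | cons => simp at hlen
  | cons d ys ih =>
    intro y' x hlen
    cases y' with
    | nil => simp at hlen
    | cons d' ys' =>
      have hlen' : ys.length = ys'.length := by simpa using hlen
      induction x with
      | nil =>
        rw [lev_nil_left, lev_nil_left]
        simp only [List.length_cons]
        omega
      | cons a xs ihx =>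
        rw [levenshtein_cons_cons, levenshtein_cons_cons]
        simp only [Levenshtein.defaultCost_delete, Levenshtein.defaultCost_insert,
          Levenshtein.defaultCost_substitute, ham_cons_cons]
        rw [← min_add_add_right, ← min_add_add_right]
        refine le_min ?_ (le_min ?_ ?_)
        · refine min_le_of_left_le ?_
          have h1 := ihx
          rw [ham_cons_cons] at h1
          omega
        · refine min_le_of_right_le (min_le_of_left_le ?_)
          have h2 := ih ys' (a :: xs) hlen'
          omega
        · refine min_le_of_right_le (min_le_of_right_le ?_)
          have h3 := ih ys' xs hlen'
          split_ifs with e1 e2 e3 <;> first | omega | (exfalso; subst_vars; simp_all)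

lemma ham_ofFn_le_one :
    ∀ {n : ℕ} (u v : Fin n → Fin k) (j0 : Fin n),
      (∀ j, j ≠ j0 → u j = v j) → ham (List.ofFn u) (List.ofFn v) ≤ 1 := by
  intro n
  induction n with
  | zero => intro u v j0 _; exact j0.elim0
  | succ m ih =>
    intro u v j0 h
    rw [List.ofFn_succ, List.ofFn_succ, ham_cons_cons]
    obtain rfl | ⟨j', rfl⟩ := Fin.eq_zero_or_eq_succ j0
    · have htail : (fun i : Fin m => u i.succ) = (fun i : Fin m => v i.succ) := by
        funext i
        exact h i.succ (Fin.succ_ne_zero i)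
      rw [htail, ham_self]
      split_ifs <;> omega
    · have h0 : u 0 = v 0 := h 0 (Fin.succ_ne_zero j').symm
      have htail := ih (fun i : Fin m => u i.succ) (fun i : Fin m => v i.succ) j'
        (fun j hj => h j.succ (fun hc => hj (Fin.succ_injective m hc)))
      rw [h0]
      simpa using htail

end EditAux


def packEquiv (k n N : ℕ) :
    (Fin N → ((Fin n → Fin k) × (Fin n → Fin k))) ≃ (Fin (N * (n + n)) → Fin k) where
  toFun σ m :=
    Sum.elim (σ (finProdFinEquiv.symm m).1).1 (σ (finProdFinEquiv.symm m).1).2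
      (finSumFinEquiv.symm (finProdFinEquiv.symm m).2)
  invFun ω i :=
    (fun j => ω (finProdFinEquiv (i, finSumFinEquiv (Sum.inl j))),
     fun j => ω (finProdFinEquiv (i, finSumFinEquiv (Sum.inr j))))
  left_inv σ := by
    funext i
    refine Prod.ext ?_ ?_ <;> funext j <;>
      simp only [Equiv.symm_apply_apply, Sum.elim_inl, Sum.elim_inr]
  right_inv ω := by
    funext m
    obtain ⟨⟨i, l⟩, rfl⟩ := finProdFinEquiv.surjective m
    obtain ⟨s, rfl⟩ := finSumFinEquiv.surjective l
    cases s <;> simp only [Equiv.symm_apply_apply, Sum.elim_inl, Sum.elim_inr]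

namespace EditAux

lemma editDist_sub_le_left {k n : ℕ} (u v w : Fin n → Fin k) (j0 : Fin n)
    (h : ∀ j, j ≠ j0 → u j = v j) :
    (editDist (List.ofFn u) (List.ofFn w) : ℝ) - (editDist (List.ofFn v) (List.ofFn w) : ℝ)
      ≤ 1 := by
  have h1 : editDist (List.ofFn u) (List.ofFn w)
      ≤ editDist (List.ofFn v) (List.ofFn w) + ham (List.ofFn u) (List.ofFn v) :=
    lev_le_add_ham_left (List.ofFn u) (List.ofFn v) (List.ofFn w) (by simp)
  have h2 := ham_ofFn_le_one u v j0 h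
  have h3 : editDist (List.ofFn u) (List.ofFn w) ≤ editDist (List.ofFn v) (List.ofFn w) + 1 := by
    omega
  have h4 : (editDist (List.ofFn u) (List.ofFn w) : ℝ)
      ≤ (editDist (List.ofFn v) (List.ofFn w) : ℝ) + 1 := by exact_mod_cast h3
  linarith

lemma editDist_sub_le_right {k n : ℕ} (w u v : Fin n → Fin k) (j0 : Fin n)
    (h : ∀ j, j ≠ j0 → u j = v j) :
    (editDist (List.ofFn w) (List.ofFn u) : ℝ) - (editDist (List.ofFn w) (List.ofFn v) : ℝ)
      ≤ 1 := by
  have h1 : editDist (List.ofFn w) (List.ofFn u)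
      ≤ editDist (List.ofFn w) (List.ofFn v) + ham (List.ofFn u) (List.ofFn v) :=
    lev_le_add_ham_right (List.ofFn u) (List.ofFn v) (List.ofFn w) (by simp)
  have h2 := ham_ofFn_le_one u v j0 h
  have h3 : editDist (List.ofFn w) (List.ofFn u) ≤ editDist (List.ofFn w) (List.ofFn v) + 1 := by
    omega
  have h4 : (editDist (List.ofFn w) (List.ofFn u) : ℝ)
      ≤ (editDist (List.ofFn w) (List.ofFn v) : ℝ) + 1 := by exact_mod_cast h3
  linarith

end EditAux

lemma packed_bdd (k n N : ℕ) (m : Fin (N * (n + n))) (ω ω' : Fin (N * (n + n)) → Fin k)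
    (hagree : ∀ j, j ≠ m → ω j = ω' j) :
    (∑ i : Fin N, (editDist (List.ofFn (((packEquiv k n N).symm ω i).1))
        (List.ofFn (((packEquiv k n N).symm ω i).2)) : ℝ))
      - (∑ i : Fin N, (editDist (List.ofFn (((packEquiv k n N).symm ω' i).1))
        (List.ofFn (((packEquiv k n N).symm ω' i).2)) : ℝ)) ≤ 1 := by
  obtain ⟨⟨i0, l⟩, rfl⟩ := finProdFinEquiv.surjective m
  obtain ⟨s, rfl⟩ := finSumFinEquiv.surjective l
  set σ := (packEquiv k n N).symm ω with hσ
  set σ' := (packEquiv k n N).symm ω' with hσ'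
  set d : ((Fin n → Fin k) × (Fin n → Fin k)) → ℝ :=
    fun p => (editDist (List.ofFn p.1) (List.ofFn p.2) : ℝ) with hd
  have hother : ∀ i, i ≠ i0 → σ i = σ' i := by
    intro i hi
    refine Prod.ext ?_ ?_ <;> funext j <;>
    · apply hagree
      intro hc
      exact hi (congrArg Prod.fst (finProdFinEquiv.injective hc))
  have hmain : d (σ i0) - d (σ' i0) ≤ 1 := by
    cases s with
    | inl j0 =>
      have hsnd : (σ i0).2 = (σ' i0).2 := by
        funext j
        apply hagree
        intro hc
        have h2 := congrArg Prod.snd (finProdFinEquiv.injective hc)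
        have h3 := finSumFinEquiv.injective h2
        cases h3
      have hfst : ∀ j, j ≠ j0 → (σ i0).1 j = (σ' i0).1 j := by
        intro j hj
        apply hagree
        intro hc
        have h2 := congrArg Prod.snd (finProdFinEquiv.injective hc)
        have h3 := finSumFinEquiv.injective h2
        exact hj (Sum.inl.inj h3)
      calc d (σ i0) - d (σ' i0)
          = (editDist (List.ofFn ((σ i0).1)) (List.ofFn ((σ i0).2)) : ℝ)
            - (editDist (List.ofFn ((σ' i0).1)) (List.ofFn ((σ i0).2)) : ℝ) := by
            rw [hd]; dsimp only; rw [hsnd]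
        _ ≤ 1 := EditAux.editDist_sub_le_left _ _ _ j0 hfst
    | inr j0 =>
      have hfst : (σ i0).1 = (σ' i0).1 := by
        funext j
        apply hagree
        intro hc
        have h2 := congrArg Prod.snd (finProdFinEquiv.injective hc)
        have h3 := finSumFinEquiv.injective h2
        cases h3
      have hsnd : ∀ j, j ≠ j0 → (σ i0).2 j = (σ' i0).2 j := by
        intro j hj
        apply hagree
        intro hc
        have h2 := congrArg Prod.snd (finProdFinEquiv.injective hc)
        have h3 := finSumFinEquiv.injective h2
        exact hj (Sum.inr.inj h3)
      calc d (σ i0) - d (σ' i0)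
          = (editDist (List.ofFn ((σ i0).1)) (List.ofFn ((σ i0).2)) : ℝ)
            - (editDist (List.ofFn ((σ i0).1)) (List.ofFn ((σ' i0).2)) : ℝ) := by
            rw [hd]; dsimp only; rw [hfst]
        _ ≤ 1 := EditAux.editDist_sub_le_right _ _ _ j0 hsnd
  calc (∑ i : Fin N, d (σ i)) - (∑ i : Fin N, d (σ' i))
      = ∑ i : Fin N, (d (σ i) - d (σ' i)) := (Finset.sum_sub_distrib _ _).symm
    _ = d (σ i0) - d (σ' i0) := by
        apply Finset.sum_eq_single i0
        · intro i _ hi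
          rw [hother i hi, sub_self]
        · intro h
          exact absurd (Finset.mem_univ i0) h
    _ ≤ 1 := hmain

set_option maxHeartbeats 2000000 in
/-- Confidence intervals for `α_k`: under the uniform measure on `N`-tuples of pairs
of strings of length `n ≥ 2`, the probability that
`α̃ − Q(n) − Δ ≤ α_k ≤ α̃ + Δ` is at least `1 − 2·exp(−N·n·Δ²)`. -/
theorem confidence_interval_alpha (k n N : ℕ) (hk : 2 ≤ k) (hn : 2 ≤ n)
    (hN : 1 ≤ N) (Δ : ℝ) (hΔ : 0 ≤ Δ) (α : ℝ)
    (hconv : Tendsto (fun m => alphaN k m) atTop (nhds α))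
    (hsandwich : ∀ m : ℕ, 2 ≤ m → alphaN k m - Qbound m ≤ α ∧ α ≤ alphaN k m) :
    1 - 2 * Real.exp (-(N * n * Δ ^ 2)) ≤
      (Nat.card {ω : Fin N → ((Fin n → Fin k) × (Fin n → Fin k)) //
          sampleMean k n N ω - Qbound n - Δ ≤ α ∧
          α ≤ sampleMean k n N ω + Δ} : ℝ) /
        (Fintype.card (Fin N → ((Fin n → Fin k) × (Fin n → Fin k))) : ℝ) := by

  classical
  haveI : Nonempty (Fin k) := ⟨⟨0, by omega⟩⟩
  have hn0 : (0:ℝ) < (n:ℝ) := by exact_mod_cast (by omega : 0 < n)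
  have hN0 : (0:ℝ) < (N:ℝ) := by exact_mod_cast (by omega : 0 < N)
  set M : ℕ := N * (n + n) with hMdef
  have hM : 0 < M := by positivity
  have hMR : (0:ℝ) < (M:ℝ) := by exact_mod_cast hM
  set E := packEquiv k n N with hE
  set d : ((Fin n → Fin k) × (Fin n → Fin k)) → ℝ :=
    fun p => (editDist (List.ofFn p.1) (List.ofFn p.2) : ℝ) with hd
  set F : (Fin N → ((Fin n → Fin k) × (Fin n → Fin k))) → ℝ :=
    fun σ => ∑ i : Fin N, d (σ i) with hF
  set F' : (Fin M → Fin k) → ℝ := fun ω => F (E.symm ω) with hF'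
  -- bounded differences
  have hbd : ∀ (i : Fin M) (ω ω' : Fin M → Fin k),
      (∀ j, j ≠ i → ω j = ω' j) → F' ω - F' ω' ≤ 1 := by
    intro i ω ω' h
    exact packed_bdd k n N i ω ω' h
  have hbdneg : ∀ (i : Fin M) (ω ω' : Fin M → Fin k),
      (∀ j, j ≠ i → ω j = ω' j) → (-F' ω) - (-F' ω') ≤ 1 := by
    intro i ω ω' h
    have := hbd i ω' ω (fun j hj => (h j hj).symm)
    linarith
  -- expectation
  have hcardρ : (Fintype.card ((Fin n → Fin k) × (Fin n → Fin k)) : ℝ) = (k:ℝ) ^ (2*n) := by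
    rw [Fintype.card_prod, Fintype.card_fun, Fintype.card_fin, Fintype.card_fin]
    push_cast
    rw [← pow_add]
    congr 1
    omega
  have hEd : Eavg d = avgEditDist k n := by
    have h1 : Eavg d = (∑ p : ((Fin n → Fin k) × (Fin n → Fin k)), d p)
        / (Fintype.card ((Fin n → Fin k) × (Fin n → Fin k)) : ℝ) := rfl
    rw [h1, hcardρ, Fintype.sum_prod_type]
    rw [avgEditDist, div_eq_inv_mul]
  have hEF : Eavg F = (N:ℝ) * avgEditDist k n := by
    rw [hF]
    rw [Eavg_sum_eval d, hEd, Fintype.card_fin]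
  have hEF' : Eavg F' = (N:ℝ) * avgEditDist k n := by
    rw [hF', ← hEF]
    exact Eavg_comp_equiv E F
  -- tail bounds
  set ε : ℝ := (n:ℝ) * (N:ℝ) * Δ with hε
  have hεnn : 0 ≤ ε := by positivity
  have tail1 := mcdiarmid_tail M hM F' hbd ε hεnn
  have tail2 := mcdiarmid_tail M hM (fun ω => -F' ω) hbdneg ε hεnn
  have hexp : -(2*ε^2/(M:ℝ)) = -((N:ℝ) * (n:ℝ) * Δ^2) := by
    rw [hε, hMdef]
    push_cast
    field_simp
    ring
  rw [hexp] at tail1 tail2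
  -- sets
  set Bad1 : Finset (Fin M → Fin k) :=
    Finset.univ.filter (fun ω : Fin M → Fin k => Eavg F' + ε ≤ F' ω) with hBad1
  set Bad2 : Finset (Fin M → Fin k) :=
    Finset.univ.filter (fun ω : Fin M → Fin k => Eavg (fun ω => -F' ω) + ε ≤ -F' ω) with hBad2
  set event : (Fin N → ((Fin n → Fin k) × (Fin n → Fin k))) → Prop :=
    fun σ => sampleMean k n N σ - Qbound n - Δ ≤ α ∧ α ≤ sampleMean k n N σ + Δ with hevent
  set GoodP : Finset (Fin M → Fin k) :=
    Finset.univ.filter (fun ω : Fin M → Fin k => event (E.symm ω)) with hGoodP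
  -- pointwise implication
  have himp : ∀ ω : Fin M → Fin k, ω ∉ Bad1 → ω ∉ Bad2 → event (E.symm ω) := by
    intro ω h1 h2
    rw [hBad1, Finset.mem_filter] at h1
    rw [hBad2, Finset.mem_filter] at h2
    push_neg at h1 h2
    have hub : F' ω < Eavg F' + ε := h1 (Finset.mem_univ ω)
    have hlb' : -F' ω < Eavg (fun ω => -F' ω) + ε := h2 (Finset.mem_univ ω)
    rw [Eavg_neg] at hlb'
    have hlb : Eavg F' - ε < F' ω := by linarith
    have hsm : sampleMean k n N (E.symm ω) = (1/((n:ℝ) * (N:ℝ))) * F' ω := rfl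
    have halphnN : Eavg F' = (n:ℝ) * (N:ℝ) * alphaN k n := by
      rw [hEF', alphaN]
      field_simp
    obtain ⟨hs1, hs2⟩ := hsandwich n hn
    have hnN : (0:ℝ) < (n:ℝ) * (N:ℝ) := by positivity
    have hup : sampleMean k n N (E.symm ω) ≤ alphaN k n + Δ := by
      rw [hsm]
      rw [halphnN, hε] at hub
      rw [div_mul_eq_mul_div, one_mul, div_le_iff₀ hnN]
      nlinarith
    have hdown : alphaN k n - Δ ≤ sampleMean k n N (E.symm ω) := by
      rw [hsm]
      rw [halphnN, hε] at hlb
      rw [div_mul_eq_mul_div, one_mul, le_div_iff₀ hnN]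
      nlinarith
    constructor
    · linarith
    · linarith
  -- counting
  have hcover : (Fintype.card (Fin M → Fin k) : ℝ)
      ≤ (GoodP.card : ℝ) + (Bad1.card : ℝ) + (Bad2.card : ℝ) := by
    have hsub : (Finset.univ : Finset (Fin M → Fin k)) ⊆ GoodP ∪ Bad1 ∪ Bad2 := by
      intro ω _
      by_cases hb1 : ω ∈ Bad1
      · exact Finset.mem_union_left _ (Finset.mem_union_right _ hb1)
      by_cases hb2 : ω ∈ Bad2
      · exact Finset.mem_union_right _ hb2
      · refine Finset.mem_union_left _ (Finset.mem_union_left _ ?_)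
        rw [hGoodP, Finset.mem_filter]
        exact ⟨Finset.mem_univ ω, himp ω hb1 hb2⟩
    have h1 : Fintype.card (Fin M → Fin k) ≤ (GoodP ∪ Bad1 ∪ Bad2).card := by
      rw [← Finset.card_univ]
      exact Finset.card_le_card hsub
    have h2 : (GoodP ∪ Bad1 ∪ Bad2).card ≤ GoodP.card + Bad1.card + Bad2.card :=
      le_trans (Finset.card_union_le _ _)
        (by have := Finset.card_union_le GoodP Bad1; omega)
    exact_mod_cast le_trans h1 h2
  -- identify Nat.card with GoodP.card
  have hNat : (Nat.card {σ : Fin N → ((Fin n → Fin k) × (Fin n → Fin k)) //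
      sampleMean k n N σ - Qbound n - Δ ≤ α ∧ α ≤ sampleMean k n N σ + Δ} : ℝ)
      = (GoodP.card : ℝ) := by
    have h1 : Nat.card {σ : Fin N → ((Fin n → Fin k) × (Fin n → Fin k)) //
        sampleMean k n N σ - Qbound n - Δ ≤ α ∧ α ≤ sampleMean k n N σ + Δ}
        = Nat.card {σ : Fin N → ((Fin n → Fin k) × (Fin n → Fin k)) // event σ} := rfl
    have h2 : Nat.card {σ : Fin N → ((Fin n → Fin k) × (Fin n → Fin k)) // event σ}
        = Nat.card {ω : Fin M → Fin k // event (E.symm ω)} :=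
      Nat.card_congr ((Equiv.subtypeEquiv E (fun σ => by rw [Equiv.symm_apply_apply])).symm).symm
    have h3 : Nat.card {ω : Fin M → Fin k // event (E.symm ω)} = GoodP.card := by
      rw [Nat.card_eq_fintype_card, Fintype.card_subtype]
    rw [h1, h2, h3]
  -- final arithmetic
  have hcards : (Fintype.card (Fin N → ((Fin n → Fin k) × (Fin n → Fin k))) : ℝ)
      = (Fintype.card (Fin M → Fin k) : ℝ) := by
    exact_mod_cast Fintype.card_congr E
  have hcpos : (0:ℝ) < (Fintype.card (Fin M → Fin k) : ℝ) := card_pos'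
  rw [hNat, hcards, le_div_iff₀ hcpos]
  nlinarith [tail1, tail2, hcover, Real.exp_pos (-((N:ℝ) * (n:ℝ) * Δ^2)), hcpos]
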